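/- (Main Theorem) The strong form of part (a) of the XYZ Conjecture implies finiteness of insulator fibers: if for every ε > 0 there are only finitely many triples (A,B,C) ∈ 𝔛 satisfying log max{|A|,|B|,|C|} > P⁺(ABC)^{2/3 + ε}, then for every positive integer I₀ there are only finitely many (A,B,C) ∈ 𝔛 with 𝔦(ABC) = I₀. -/

import Mathlib

open Filter

/-- `(A,B,C)` is a primitive non-cuspidal solution to `A + B + C = 0`. -/
def IsABC (A B C : ℤ) : Prop :=
  A + B + C = 0 ∧ Int.gcd (Int.gcd A B) C = 1 ∧ A * B * C ≠ 0

/-- The height `H(A,B,C) = max {|A|, |B|, |C|}`. -/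
def height (A B C : ℤ) : ℤ := max |A| (max |B| |C|)

/-- The radical of a nonzero integer: its largest squarefree divisor,
the product of the distinct primes dividing it. -/
def rad (n : ℤ) : ℕ := ∏ p ∈ n.natAbs.primeFactors, p

/-- `P⁺(n)`: the largest prime divisor of `n`, or `1` if `|n| = 1`. -/
def Pplus (n : ℤ) : ℕ := max (n.natAbs.primeFactors.sup id) 1

/-- A nonzero integer `m` is insulated if every prime `p ≤ P⁺(m)` divides `m`. -/
def Insulated (m : ℤ) : Prop :=
  m ≠ 0 ∧ ∀ p : ℕ, p.Prime → p ≤ Pplus m → (p : ℤ) ∣ m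

/-- The insulator `𝔦(n)`: the smallest positive integer `I` such that `n * I` is insulated. -/
noncomputable def insulator (n : ℤ) : ℕ := sInf {I : ℕ | 0 < I ∧ Insulated (n * I)}

section Aux

open Finset Asymptotics Real

lemma primorial_mono' : Monotone primorial := by
  intro a b hab
  apply Finset.prod_le_prod_of_subset_of_one_le'
  · exact Finset.filter_subset_filter _ (Finset.range_subset_range.2 (by omega))
  · intro i hi _; exact (Finset.mem_filter.1 hi).2.one_lt.le

lemma centralBinom_le_primorial_pow {n k : ℕ} (hn : 0 < n) (hk : 2 * n ≤ 2 ^ k) :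
    Nat.centralBinom n ≤ primorial (2 * n) ^ k := by
  have h2n : 0 < 2 * n := by omega
  conv_lhs => rw [← Nat.factorization_prod_pow_eq_self (Nat.centralBinom_ne_zero n)]
  rw [Finsupp.prod, Nat.support_factorization]
  calc ∏ p ∈ (Nat.centralBinom n).primeFactors, p ^ (Nat.centralBinom n).factorization p
      ≤ ∏ p ∈ (Nat.centralBinom n).primeFactors, p ^ k := by
        apply Finset.prod_le_prod (fun _ _ => Nat.zero_le _)
        intro p hp
        have hpp : p.Prime := Nat.prime_of_mem_primeFactors hp
        have h1 : p ^ (Nat.centralBinom n).factorization p ≤ 2 * n :=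
          Nat.pow_factorization_choose_le h2n
        have h2 : p ^ (Nat.centralBinom n).factorization p ≤ p ^ k :=
          le_trans h1 (le_trans hk (Nat.pow_le_pow_left hpp.two_le k))
        exact Nat.pow_le_pow_right hpp.pos ((Nat.pow_le_pow_iff_right hpp.one_lt).mp h2)
    _ = (∏ p ∈ (Nat.centralBinom n).primeFactors, p) ^ k := by rw [Finset.prod_pow]
    _ ≤ primorial (2 * n) ^ k := by
        apply Nat.pow_le_pow_left
        apply Finset.prod_le_prod_of_subset_of_one_le'
        · intro p hp
          have hpp : p.Prime := Nat.prime_of_mem_primeFactors hp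
          have hdvd : p ∣ Nat.centralBinom n := Nat.dvd_of_mem_primeFactors hp
          have hple : p ≤ 2 * n := by
            have h1 : p ^ (Nat.centralBinom n).factorization p ≤ 2 * n :=
              Nat.pow_factorization_choose_le h2n
            have h2 : 1 ≤ (Nat.centralBinom n).factorization p :=
              Nat.Prime.factorization_pos_of_dvd hpp (Nat.centralBinom_ne_zero n) hdvd
            calc p = p ^ 1 := (pow_one p).symm
              _ ≤ p ^ (Nat.centralBinom n).factorization p := Nat.pow_le_pow_right hpp.pos h2
              _ ≤ 2 * n := h1
          simp only [Finset.mem_filter, Finset.mem_range]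
          exact ⟨by omega, hpp⟩
        · intro i hi _; exact (Finset.mem_filter.1 hi).2.one_lt.le

lemma insulated_of_insulator_eq {n : ℤ} {I₀ : ℕ} (hI₀ : 0 < I₀)
    (h : insulator n = I₀) : Insulated (n * I₀) := by
  have hne : {I : ℕ | 0 < I ∧ Insulated (n * I)}.Nonempty := by
    by_contra hempty
    rw [Set.not_nonempty_iff_eq_empty] at hempty
    rw [insulator, hempty, Nat.sInf_empty] at h
    omega
  have hmem := Nat.sInf_mem hne
  rw [← insulator] at hmem
  rw [h] at hmem
  exact hmem.2

lemma pplus_le_of_dvd {a b : ℤ} (h : a ∣ b) (hb : b ≠ 0) : Pplus a ≤ Pplus b := by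
  unfold Pplus
  apply max_le _ (le_max_right _ _)
  apply le_max_of_le_left
  apply Finset.sup_mono
  exact Nat.primeFactors_mono (Int.natAbs_dvd_natAbs.2 h) (by simpa using hb)

lemma primorial_le_of_insulated {m : ℤ} (hm : Insulated m) {P : ℕ} (hP : P ≤ Pplus m) :
    primorial P ≤ m.natAbs := by
  have hm0 : m.natAbs ≠ 0 := by simpa using hm.1
  calc primorial P = ∏ p ∈ Finset.range (P + 1) with p.Prime, p := rfl
    _ ≤ ∏ p ∈ m.natAbs.primeFactors, p := by
        apply Finset.prod_le_prod_of_subset_of_one_le'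
        · intro p hp
          obtain ⟨hlt, hpp⟩ := Finset.mem_filter.1 hp
          have hdvd : (p : ℤ) ∣ m := hm.2 p hpp
            (le_trans (Nat.lt_succ_iff.mp (Finset.mem_range.1 hlt)) hP)
          exact Nat.mem_primeFactors.2 ⟨hpp, Int.natCast_dvd.mp hdvd, hm0⟩
        · intro i hi _; exact (Nat.prime_of_mem_primeFactors hi).one_lt.le
    _ ≤ m.natAbs := Nat.le_of_dvd (Nat.pos_of_ne_zero hm0) (Nat.prod_primeFactors_dvd _)

lemma asymp_key (c : ℝ) :
    ∀ᶠ x : ℝ in atTop,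
      Real.log (x + 1) + (Real.logb 2 x + 1) * (3 * x ^ ((5:ℝ)/6) + c) < (x - 1) * Real.log 2 := by
  set L : ℝ → ℝ := fun x => Real.log (x + 1) + (Real.logb 2 x + 1) * (3 * x ^ ((5:ℝ)/6) + c)
    with hL
  set u : ℝ → ℝ := fun x => Real.log 2 * x with hu
  have hlog2 : (0:ℝ) < Real.log 2 := Real.log_pos (by norm_num)
  have hid_O_u : (fun x : ℝ => x) =O[atTop] u := by
    simpa [hu] using (isBigO_refl (fun x : ℝ => x) atTop).const_mul_right hlog2.ne'
  have h1 : (fun x : ℝ => Real.log (x + 1)) =o[atTop] (fun x : ℝ => x) := by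
    have hcomp := Real.isLittleO_log_id_atTop.comp_tendsto
      (tendsto_atTop_add_const_right atTop (1:ℝ) tendsto_id)
    have h2 : (fun x : ℝ => x + 1) =O[atTop] (fun x : ℝ => x) := by
      have hc : (fun _ : ℝ => (1:ℝ)) =o[atTop] (fun x : ℝ => x) :=
        Asymptotics.isLittleO_const_left.2 (Or.inr (by simpa [Function.comp_def] using tendsto_abs_atTop_atTop))
      simpa using (isBigO_refl (fun x : ℝ => x) atTop).add hc.isBigO
    have h1' : (fun x : ℝ => Real.log (x + 1)) =o[atTop] (fun x : ℝ => x + 1) := by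
      simpa [Function.comp_def] using hcomp
    exact h1'.trans_isBigO h2
  have hconst : ∀ d : ℝ, (fun _ : ℝ => d) =o[atTop] (fun x : ℝ => x) := fun d =>
    Asymptotics.isLittleO_const_left.2 (Or.inr (by simpa [Function.comp_def] using tendsto_abs_atTop_atTop))
  have hlogb : (fun x : ℝ => Real.logb 2 x + 1) =o[atTop] (fun x : ℝ => x ^ ((1:ℝ)/6)) := by
    have hconst' : (fun _ : ℝ => (1:ℝ)) =o[atTop] (fun x : ℝ => x ^ ((1:ℝ)/6)) :=
      Asymptotics.isLittleO_const_left.2 (Or.inr (by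
        have := tendsto_rpow_atTop (show (0:ℝ) < 1/6 by norm_num)
        exact tendsto_abs_atTop_atTop.comp this))
    have hlog : (fun x : ℝ => Real.logb 2 x) =o[atTop] (fun x : ℝ => x ^ ((1:ℝ)/6)) := by
      have := (isLittleO_log_rpow_atTop (show (0:ℝ) < 1/6 by norm_num)).const_mul_left
        ((Real.log 2)⁻¹)
      simpa [Real.logb, div_eq_inv_mul] using this
    simpa using hlog.add hconst'
  have hrpow : (fun x : ℝ => 3 * x ^ ((5:ℝ)/6) + c) =O[atTop] (fun x : ℝ => x ^ ((5:ℝ)/6)) := by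
    have hconst' : (fun _ : ℝ => c) =o[atTop] (fun x : ℝ => x ^ ((5:ℝ)/6)) :=
      Asymptotics.isLittleO_const_left.2 (Or.inr (by
        have := tendsto_rpow_atTop (show (0:ℝ) < 5/6 by norm_num)
        exact tendsto_abs_atTop_atTop.comp this))
    simpa using ((isBigO_refl (fun x : ℝ => x ^ ((5:ℝ)/6)) atTop).const_mul_left 3).add
      hconst'.isBigO
  have hprod : (fun x : ℝ => (Real.logb 2 x + 1) * (3 * x ^ ((5:ℝ)/6) + c))
      =o[atTop] (fun x : ℝ => x) := by
    have hm := hlogb.mul_isBigO hrpow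
    refine hm.trans_eventuallyEq ?_
    filter_upwards [eventually_gt_atTop (0:ℝ)] with x hx
    rw [← Real.rpow_add hx]
    norm_num
  have hLo : (fun x : ℝ => -(Real.log 2) - L x) =o[atTop] u := by
    have hsum : (fun x : ℝ => -(Real.log 2) - L x) =o[atTop] (fun x : ℝ => x) := by
      have := ((hconst (-(Real.log 2))).sub ((h1.add hprod)))
      simpa [hL, sub_eq_add_neg, add_comm, add_left_comm, add_assoc] using this
    exact hsum.trans_isBigO hid_O_u
  have hv : (fun x : ℝ => (x - 1) * Real.log 2 - L x) ~[atTop] u := by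
    show ((fun x : ℝ => (x - 1) * Real.log 2 - L x) - u) =o[atTop] u
    have heq : ((fun x : ℝ => (x - 1) * Real.log 2 - L x) - u)
        = fun x : ℝ => -(Real.log 2) - L x := by
      funext x; simp only [Pi.sub_apply, hu]; ring
    rw [heq]; exact hLo
  have hut : Tendsto u atTop atTop := tendsto_id.const_mul_atTop hlog2
  have hvt : Tendsto (fun x : ℝ => (x - 1) * Real.log 2 - L x) atTop atTop :=
    hv.symm.tendsto_atTop hut
  filter_upwards [hvt.eventually_gt_atTop 0] with x hx
  rw [show L x = Real.log (x + 1) + (Real.logb 2 x + 1) * (3 * x ^ ((5:ℝ)/6) + c) from rfl] at hx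
  linarith

lemma box_finite (N : ℤ) :
    {t : ℤ × ℤ × ℤ | |t.1| ≤ N ∧ |t.2.1| ≤ N ∧ |t.2.2| ≤ N}.Finite := by
  apply Set.Finite.subset (Set.finite_Icc ((-N, -N, -N) : ℤ × ℤ × ℤ) (N, N, N))
  rintro ⟨a, b, c⟩ ⟨h1, h2, h3⟩
  rw [abs_le] at h1 h2 h3
  exact ⟨⟨h1.1, h2.1, h3.1⟩, ⟨h1.2, h2.2, h3.2⟩⟩

end Aux

set_option maxHeartbeats 1000000 in
/-- Main Theorem: the strong form of part (a) of the XYZ Conjecture implies that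
only finitely many solutions in 𝔛 have any given insulator. -/
theorem strong_xyz_implies_finite_insulator_fibers
    (hstrong : ∀ ε : ℝ, 0 < ε →
      {t : ℤ × ℤ × ℤ | IsABC t.1 t.2.1 t.2.2 ∧
        Real.log ((height t.1 t.2.1 t.2.2 : ℤ) : ℝ) >
          ((Pplus (t.1 * t.2.1 * t.2.2) : ℕ) : ℝ) ^ ((2 : ℝ) / 3 + ε)}.Finite) :
    ∀ I₀ : ℕ, 0 < I₀ →
      {t : ℤ × ℤ × ℤ | IsABC t.1 t.2.1 t.2.2 ∧
        insulator (t.1 * t.2.1 * t.2.2) = I₀}.Finite := by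
  intro I₀ hI₀
  have hbad := hstrong (1/6) (by norm_num)
  obtain ⟨x₀, hx₀⟩ := eventually_atTop.1 (asymp_key (Real.log I₀))
  set C : ℝ := max x₀ 2 with hC
  have hC2 : (2:ℝ) ≤ C := le_max_right _ _
  set N : ℤ := ⌈Real.exp (C ^ ((5:ℝ)/6))⌉ with hN
  apply Set.Finite.subset (hbad.union (box_finite N))
  rintro ⟨A, B, Bc⟩ ⟨habc, hins⟩
  by_cases hbadmem : (A, B, Bc) ∈ {t : ℤ × ℤ × ℤ | IsABC t.1 t.2.1 t.2.2 ∧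
      Real.log ((height t.1 t.2.1 t.2.2 : ℤ) : ℝ) >
        ((Pplus (t.1 * t.2.1 * t.2.2) : ℕ) : ℝ) ^ ((2 : ℝ) / 3 + 1/6)}
  · exact Or.inl hbadmem
  right
  -- setup
  set n : ℤ := A * B * Bc with hn
  set H : ℤ := height A B Bc with hH
  set P : ℕ := Pplus n with hP
  have hn0 : n ≠ 0 := habc.2.2
  have hins' : Insulated (n * I₀) := insulated_of_insulator_eq hI₀ hins
  have hm0 : n * (I₀:ℤ) ≠ 0 := hins'.1
  have hPQ : P ≤ Pplus (n * I₀) := pplus_le_of_dvd ⟨(I₀:ℤ), rfl⟩ hm0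
  have hprim : primorial P ≤ (n * (I₀:ℤ)).natAbs := primorial_le_of_insulated hins' hPQ
  -- height bounds
  have hA0 : A ≠ 0 := fun h => hn0 (by simp [hn, h])
  have hH1 : 1 ≤ H := le_trans (Int.one_le_abs hA0) (le_max_left _ _)
  set Hn : ℕ := H.natAbs with hHn
  have hHn1 : 1 ≤ Hn := by omega
  have hH0 : (0:ℤ) ≤ H := by omega
  have hHnR : ((Hn : ℕ) : ℝ) = ((H : ℤ) : ℝ) := by
    rw [hHn, Nat.cast_natAbs, abs_of_nonneg hH0]
  -- |n| ≤ H^3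
  have hHa : |A| ≤ H := le_max_left _ _
  have hHb : |B| ≤ H := le_trans (le_max_left _ _) (le_max_right _ _)
  have hHc : |Bc| ≤ H := le_trans (le_max_right _ _) (le_max_right _ _)
  have habs : |n| ≤ H ^ 3 := by
    rw [hn, abs_mul, abs_mul]
    calc |A| * |B| * |Bc| ≤ H * H * |Bc| := by
          apply mul_le_mul_of_nonneg_right _ (abs_nonneg _)
          exact mul_le_mul hHa hHb (abs_nonneg _) (by omega)
      _ ≤ H * H * H := by
          apply mul_le_mul_of_nonneg_left hHc (by nlinarith)
      _ = H ^ 3 := by ring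
  have hnH : n.natAbs ≤ Hn ^ 3 := by
    have h1 : (n.natAbs : ℤ) ≤ ((Hn : ℕ) : ℤ) ^ 3 := by
      rw [← Int.abs_eq_natAbs, hHn, Int.natAbs_of_nonneg hH0]
      exact habs
    exact_mod_cast h1
  have hmabs : (n * (I₀:ℤ)).natAbs = n.natAbs * I₀ := by
    simp [Int.natAbs_mul]
  -- not in the bad set: log H ≤ P^(5/6)
  have hnot : ¬ (Real.log ((H : ℤ) : ℝ) > ((P : ℕ) : ℝ) ^ ((2:ℝ)/3 + 1/6)) :=
    fun hgt => hbadmem ⟨habc, hgt⟩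
  have hlogH : Real.log ((H : ℤ) : ℝ) ≤ ((P : ℕ) : ℝ) ^ ((5:ℝ)/6) := by
    have := not_lt.1 hnot
    rwa [show (2:ℝ)/3 + 1/6 = 5/6 by norm_num] at this
  have hP1 : 1 ≤ P := by rw [hP]; exact le_max_right _ _
  have hlogH0 : 0 ≤ Real.log ((H : ℤ) : ℝ) :=
    Real.log_nonneg (by exact_mod_cast hH1)
  have hlogI0 : 0 ≤ Real.log (I₀ : ℝ) :=
    Real.log_nonneg (by exact_mod_cast hI₀)
  -- the key bound: (P : ℝ) ≤ C
  have hPC : (P : ℝ) ≤ C := by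
    by_contra hcon
    push_neg at hcon
    have hx : x₀ ≤ (P : ℝ) := le_trans (le_max_left _ _) hcon.le
    have hkey := hx₀ (P : ℝ) hx
    have hP2 : 2 ≤ P := by exact_mod_cast le_trans hC2 hcon.le
    set nn := P / 2 with hnn
    have hnn0 : 0 < nn := by omega
    have h2nP : 2 * nn ≤ P := by omega
    have hP2nn : P ≤ 2 * nn + 1 := by omega
    set k := Nat.log 2 P + 1 with hk
    have hkpow : 2 * nn ≤ 2 ^ k :=
      le_trans h2nP (Nat.lt_pow_succ_log_self (by norm_num) P).le
    have hchain : 4 ^ nn ≤ (P + 1) * (Hn ^ 3 * I₀) ^ k := by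
      calc 4 ^ nn ≤ (2 * nn + 1) * Nat.centralBinom nn := by
            simpa [Nat.centralBinom] using
              Nat.four_pow_le_two_mul_add_one_mul_central_binom nn
        _ ≤ (2 * nn + 1) * primorial (2 * nn) ^ k :=
            Nat.mul_le_mul_left _ (centralBinom_le_primorial_pow hnn0 hkpow)
        _ ≤ (P + 1) * primorial P ^ k :=
            Nat.mul_le_mul (by omega) (Nat.pow_le_pow_left (primorial_mono h2nP) k)
        _ ≤ (P + 1) * (Hn ^ 3 * I₀) ^ k := by
            apply Nat.mul_le_mul_left
            apply Nat.pow_le_pow_left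
            exact le_trans hprim (by rw [hmabs]; exact Nat.mul_le_mul_right _ hnH)
    -- take real logs
    have hcast : ((4:ℝ)) ^ nn ≤ (((P:ℕ):ℝ) + 1) * (((Hn:ℕ):ℝ) ^ 3 * (I₀:ℝ)) ^ k := by
      exact_mod_cast hchain
    have hHnpos : (0:ℝ) < ((Hn:ℕ):ℝ) ^ 3 * (I₀:ℝ) := by
      have h1 : (1:ℝ) ≤ ((Hn:ℕ):ℝ) := by exact_mod_cast hHn1
      have h2 : (1:ℝ) ≤ (I₀:ℝ) := by exact_mod_cast hI₀
      exact mul_pos (pow_pos (by linarith) 3) (by linarith)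
    have hlogle : Real.log ((4:ℝ) ^ nn) ≤
        Real.log ((((P:ℕ):ℝ) + 1) * (((Hn:ℕ):ℝ) ^ 3 * (I₀:ℝ)) ^ k) :=
      Real.log_le_log (by positivity) hcast
    rw [Real.log_pow, Real.log_mul (by positivity) (by positivity),
      Real.log_pow, Real.log_mul (by positivity) (by positivity),
      Real.log_pow] at hlogle
    push_cast at hlogle
    -- hlogle : nn * log 4 ≤ log (P+1) + k * (3 * log Hn + log I₀)
    have hlogHn : Real.log ((Hn:ℕ):ℝ) ≤ ((P:ℕ):ℝ) ^ ((5:ℝ)/6) := by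
      rw [hHnR]; exact hlogH
    have hlogHn0 : 0 ≤ Real.log ((Hn:ℕ):ℝ) := by rw [hHnR]; exact hlogH0
    have hkR : ((k:ℕ):ℝ) ≤ Real.logb 2 ((P:ℕ):ℝ) + 1 := by
      rw [hk]
      push_cast
      have hnl := Real.natLog_le_logb P 2
      push_cast at hnl
      linarith
    have hk0 : (0:ℝ) ≤ ((k:ℕ):ℝ) := by positivity
    have hfac : (0:ℝ) ≤ 3 * Real.log ((Hn:ℕ):ℝ) + Real.log (I₀:ℝ) := by linarith
    have hmulle : ((k:ℕ):ℝ) * (3 * Real.log ((Hn:ℕ):ℝ) + Real.log (I₀:ℝ)) ≤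
        (Real.logb 2 ((P:ℕ):ℝ) + 1) * (3 * ((P:ℕ):ℝ) ^ ((5:ℝ)/6) + Real.log (I₀:ℝ)) := by
      apply mul_le_mul hkR (by linarith) hfac (le_trans hk0 hkR)
    rw [hk] at hmulle
    push_cast at hmulle
    have hlog2 : (0:ℝ) < Real.log 2 := Real.log_pos (by norm_num)
    have hlog4 : Real.log (4:ℝ) = 2 * Real.log 2 := by
      rw [show (4:ℝ) = 2 ^ 2 by norm_num, Real.log_pow]; push_cast; ring
    have hnnR : ((P:ℕ):ℝ) - 1 ≤ 2 * ((nn:ℕ):ℝ) := by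
      have : ((P:ℕ):ℝ) ≤ 2 * ((nn:ℕ):ℝ) + 1 := by exact_mod_cast hP2nn
      linarith
    have hfinal : (((P:ℕ):ℝ) - 1) * Real.log 2 ≤
        Real.log (((P:ℕ):ℝ) + 1) +
          (Real.logb 2 ((P:ℕ):ℝ) + 1) * (3 * ((P:ℕ):ℝ) ^ ((5:ℝ)/6) + Real.log (I₀:ℝ)) := by
      have h1 : (((P:ℕ):ℝ) - 1) * Real.log 2 ≤ ((nn:ℕ):ℝ) * Real.log 4 := by
        rw [hlog4]
        have hm := mul_le_mul_of_nonneg_right hnnR hlog2.le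
        linarith
      rw [hk] at hlogle; push_cast at hlogle
      linarith [h1, hlogle, hmulle]
    linarith
  -- conclude membership in the box
  have hPpow : ((P:ℕ):ℝ) ^ ((5:ℝ)/6) ≤ C ^ ((5:ℝ)/6) :=
    Real.rpow_le_rpow (by positivity) hPC (by norm_num)
  have hHle : ((H:ℤ):ℝ) ≤ Real.exp (C ^ ((5:ℝ)/6)) := by
    have hHpos : (0:ℝ) < ((H:ℤ):ℝ) := by exact_mod_cast (by omega : (0:ℤ) < H)
    calc ((H:ℤ):ℝ) = Real.exp (Real.log ((H:ℤ):ℝ)) := (Real.exp_log hHpos).symm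
      _ ≤ Real.exp (C ^ ((5:ℝ)/6)) := Real.exp_le_exp.2 (le_trans hlogH hPpow)
  have hHN : H ≤ N := by
    have : ((H:ℤ):ℝ) ≤ ((N:ℤ):ℝ) := le_trans hHle (Int.le_ceil _)
    exact_mod_cast this
  exact ⟨le_trans hHa hHN, le_trans hHb hHN, le_trans hHc hHN⟩
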